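/- In a systematic binary Hamming code Ham(r,2) with r ≥ 3, the number of minimum non-singleton recovery sets containing exactly t non-systematic (parity) nodes, over all data symbols, is C(r,t)·(2^{r−1} − t) for 1 ≤ t ≤ r. -/

import Mathlib

open Finset

/-- `R` is a recovery set for data symbol `i` with respect to the generator matrix `G`. -/
def IsRecoverySet {k n : ℕ} {F : Type*} [Field F] (G : Matrix (Fin k) (Fin n) F)
    (i : Fin k) (R : Finset (Fin n)) : Prop :=
  (Pi.single i 1 : Fin k → F) ∈ Submodule.span F ((fun j => fun a => G a j) '' (R : Set (Fin n)))

/-- `R` is a minimum (inclusion-minimal) recovery set for data symbol `i`. -/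
def IsMinRecoverySet {k n : ℕ} {F : Type*} [Field F] (G : Matrix (Fin k) (Fin n) F)
    (i : Fin k) (R : Finset (Fin n)) : Prop :=
  IsRecoverySet G i R ∧ ∀ R' : Finset (Fin n), R' ⊂ R → ¬ IsRecoverySet G i R'


private lemma zmod2_cases (x : ZMod 2) : x = 0 ∨ x = 1 := by
  have : ∀ y : ZMod 2, y = 0 ∨ y = 1 := by decide
  exact this x

private lemma aux_pow (m : ℕ) : m + 4 ≤ 2 ^ (m + 2) := by
  induction m with
  | zero => norm_num
  | succ p ih =>
    have h2 : 2 ^ (p + 1 + 2) = 2 ^ (p + 2) * 2 := by ring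
    omega

private lemma mem_span_cols {ι M : Type*} [AddCommGroup M] [Module (ZMod 2) M] [DecidableEq ι]
    (v : ι → M) (R : Finset ι) (x : M) :
    x ∈ Submodule.span (ZMod 2) (v '' (R : Set ι)) ↔ ∃ R' ⊆ R, ∑ j ∈ R', v j = x := by
  constructor
  · intro hx
    obtain ⟨l, hl, hlx⟩ := (Finsupp.mem_span_image_iff_linearCombination _).1 hx
    refine ⟨l.support, fun j hj => by
      have := (Finsupp.mem_supported (ZMod 2) l).1 hl (Finset.mem_coe.2 hj)
      exact Finset.mem_coe.1 this, ?_⟩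
    rw [← hlx, Finsupp.linearCombination_apply, Finsupp.sum]
    refine Finset.sum_congr rfl fun j hj => ?_
    rcases zmod2_cases (l j) with h | h
    · exact absurd h (Finsupp.mem_support_iff.1 hj)
    · rw [h, one_smul]
  · rintro ⟨R', hR', rfl⟩
    exact Submodule.sum_mem _ fun j hj =>
      Submodule.subset_span ⟨j, Finset.mem_coe.2 (hR' hj), rfl⟩

private lemma isMinRecovery_iff {k n : ℕ} (G : Matrix (Fin k) (Fin n) (ZMod 2)) (i : Fin k)
    (R : Finset (Fin n)) :
    IsMinRecoverySet G i R ↔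
      ((∑ j ∈ R, (fun a : Fin k => G a j)) = (Pi.single i 1 : Fin k → ZMod 2) ∧
        ∀ D ⊆ R, D.Nonempty → (∑ j ∈ D, (fun a : Fin k => G a j)) ≠ 0) := by
  have key : ∀ R₀ : Finset (Fin n), IsRecoverySet G i R₀ ↔
      ∃ R' ⊆ R₀, (∑ j ∈ R', fun a : Fin k => G a j) = (Pi.single i 1 : Fin k → ZMod 2) :=
    fun R₀ => mem_span_cols (fun j (a : Fin k) => G a j) R₀ _
  constructor
  · rintro ⟨hrec, hmin⟩
    obtain ⟨R', hsub, hsum⟩ := (key R).1 hrec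
    have hRR : R' = R := by
      by_contra hne
      exact hmin R' (Finset.ssubset_iff_subset_ne.2 ⟨hsub, hne⟩)
        ((key R').2 ⟨R', Finset.Subset.refl _, hsum⟩)
    rw [hRR] at hsum
    refine ⟨hsum, ?_⟩
    intro D hD hDne h0
    apply hmin (R \ D) (Finset.sdiff_ssubset hD hDne)
    apply (key _).2
    refine ⟨R \ D, Finset.Subset.refl _, ?_⟩
    have hadd : ((∑ x ∈ R \ D, fun a : Fin k => G a x) + ∑ x ∈ D, fun a : Fin k => G a x)
        = ∑ x ∈ R, fun a : Fin k => G a x := Finset.sum_sdiff hD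
    rw [h0, add_zero] at hadd
    rw [hadd, hsum]
  · rintro ⟨hsum, hind⟩
    refine ⟨(key R).2 ⟨R, Finset.Subset.refl _, hsum⟩, ?_⟩
    intro R' hR' hrec'
    obtain ⟨R'', hsub, hsum''⟩ := (key R').1 hrec'
    have hsubR : R'' ⊆ R := hsub.trans hR'.subset
    have hne : (R \ R'').Nonempty := by
      rw [Finset.sdiff_nonempty]
      intro hcon
      exact hR'.not_subset (hcon.trans hsub)
    have hadd : ((∑ x ∈ R \ R'', fun a : Fin k => G a x) + ∑ x ∈ R'', fun a : Fin k => G a x)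
        = ∑ x ∈ R, fun a : Fin k => G a x := Finset.sum_sdiff hsubR
    rw [hsum'', hsum] at hadd
    exact hind (R \ R'') Finset.sdiff_subset hne (add_eq_right.1 hadd)
/-- In a systematic binary Hamming code `Ham(r,2)` with `r ≥ 3`, the number
of minimum non-singleton recovery sets containing exactly `t` non-systematic (parity) nodes,
counted over all data symbols (i.e. as pairs of a data symbol and a recovery set for it),
is `C(r,t) · (2^(r-1) - t)` for `1 ≤ t ≤ r`. -/
theorem stmt17 {r n k : ℕ} (hr : 3 ≤ r) (hn : n = 2 ^ r - 1) (hk : k = 2 ^ r - 1 - r)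
    (H : Matrix (Fin r) (Fin n) (ZMod 2))
    (hcols : ∀ v : Fin r → ZMod 2, v ≠ 0 → ∃! j : Fin n, (fun a => H a j) = v)
    (G : Matrix (Fin k) (Fin n) (ZMod 2))
    (hspan : Submodule.span (ZMod 2) (Set.range G) = LinearMap.ker H.mulVecLin)
    (S : Fin k → Fin n)
    (hS : ∀ a : Fin k, (fun b => G b (S a)) = Pi.single a 1)
    (t : ℕ) (ht1 : 1 ≤ t) (ht2 : t ≤ r) :
    {p : Fin k × Finset (Fin n) |
        IsMinRecoverySet G p.1 p.2 ∧ 1 < p.2.card ∧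
        (p.2.filter fun j => ∀ a : Fin k, S a ≠ j).card = t}.ncard
      = r.choose t * (2 ^ (r - 1) - t) := by
  classical
  have hpow : r < 2 ^ (r - 1) := by
    obtain ⟨m, rfl⟩ : ∃ m, r = m + 3 := ⟨r - 3, by omega⟩
    have h := aux_pow m
    have h2 : m + 3 - 1 = m + 2 := rfl
    rw [h2]; omega
  have hrn : r ≤ n := by have := @Nat.lt_two_pow_self r; omega
  have hSinj : Function.Injective S := by
    intro a a' hss
    by_contra hne
    have h1 : (Pi.single a 1 : Fin k → ZMod 2) = Pi.single a' 1 := by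
      rw [← hS a, ← hS a', hss]
    have h2 := congrFun h1 a
    simp [Pi.single_apply, hne] at h2
  set P : Finset (Fin n) := univ.filter (fun j => ∀ a, S a ≠ j) with hPdef
  have hPmem : ∀ j, j ∈ P ↔ ∀ a, S a ≠ j := fun j => by simp [hPdef]
  have hPcard : P.card = r := by
    have h1 : P = univ \ univ.image S := by
      ext j
      simp [hPdef]
    rw [h1, card_sdiff_of_subset (subset_univ _), card_image_of_injective _ hSinj, card_univ, card_univ]
    simp only [Fintype.card_fin]
    have := @Nat.lt_two_pow_self r
    omega
  -- columns of H
  set e : Fin n → (Fin r → ZMod 2) := fun j a => H a j with hedef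
  have hcard_ne : Fintype.card {v : Fin r → ZMod 2 // v ≠ 0} = n := by
    have h1 : Fintype.card {v : Fin r → ZMod 2 // v ≠ 0}
        = Fintype.card (Fin r → ZMod 2) - 1 := by
      rw [Fintype.card_subtype_compl (p := fun v : Fin r → ZMod 2 => v = 0),
        Fintype.card_subtype_eq (0 : Fin r → ZMod 2)]
    rw [h1]
    simp only [Fintype.card_fun, Fintype.card_fin]
    have : Fintype.card (ZMod 2) = 2 := by decide
    rw [this]; omega
  set ch : {v : Fin r → ZMod 2 // v ≠ 0} → Fin n := fun v => (hcols v.1 v.2).choose with hchdef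
  have hch_spec : ∀ v, e (ch v) = v.1 := fun v => (hcols v.1 v.2).choose_spec.1
  have hch_inj : Function.Injective ch := by
    intro v v' h
    apply Subtype.ext
    rw [← hch_spec v, ← hch_spec v', h]
  have hch_surj : Function.Surjective ch := by
    have hb : Function.Bijective ch :=
      (Fintype.bijective_iff_injective_and_card ch).2 ⟨hch_inj, by rw [hcard_ne]; simp⟩
    exact hb.2
  have he0 : ∀ j, e j ≠ 0 := by
    intro j
    obtain ⟨v, rfl⟩ := hch_surj j
    rw [hch_spec]; exact v.2
  have hesurj : ∀ v : Fin r → ZMod 2, v ≠ 0 → ∃ j, e j = v :=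
    fun v hv => ⟨ch ⟨v, hv⟩, hch_spec _⟩
  have heinj : Function.Injective e := by
    intro j j' h
    exact (hcols (e j) (he0 j)).unique rfl h.symm
  -- rows of G are codewords
  have hrow : ∀ (a : Fin k) (bb : Fin r), (∑ j, G a j * e j bb) = 0 := by
    intro a bb
    have hm : H.mulVecLin (G a) = 0 := by
      have hmem : G a ∈ LinearMap.ker H.mulVecLin := by
        rw [← hspan]; exact Submodule.subset_span ⟨a, rfl⟩
      simpa using hmem
    have h2 := congrFun hm bb
    simpa [Matrix.mulVecLin_apply, Matrix.mulVec, dotProduct, mul_comm, hedef] using h2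
  have hGS : ∀ a b : Fin k, G b (S a) = if b = a then 1 else 0 := by
    intro a b
    have := congrFun (hS a) b
    rw [this, Pi.single_apply]
  have hrepr_eq : ∀ a : Fin k, e (S a) = ∑ j ∈ P, G a j • e j := by
    intro a
    funext bb
    have h0 := hrow a bb
    have hsplit := Finset.sum_filter_add_sum_filter_not univ (fun j => ∀ b, S b ≠ j)
      (fun j => G a j * e j bb)
    have himg : (univ.filter (fun j => ¬ ∀ b, S b ≠ j)) = univ.image S := by
      ext j
      simp [not_forall]
    have hsys : (∑ j ∈ univ.image S, G a j * e j bb) = e (S a) bb := by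
      rw [Finset.sum_image (fun x _ y _ h => hSinj h)]
      have : ∀ b : Fin k, G a (S b) * e (S b) bb = if a = b then e (S b) bb else 0 := by
        intro b
        rw [hGS b a]
        by_cases hab : a = b <;> simp [hab]
      rw [Finset.sum_congr rfl (fun b _ => this b), Finset.sum_ite_eq]
      simp
    rw [himg, hsys, h0] at hsplit
    -- hsplit : (∑ j ∈ P, G a j * e j bb) + e (S a) bb = 0
    have hchar : ∀ x y : ZMod 2, x + y = 0 → y = x := by decide
    have := hchar _ _ hsplit
    rw [Finset.sum_apply]
    simp only [Pi.smul_apply, smul_eq_mul]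
    rw [hPdef]
    exact this
  -- basis of parity columns
  have hPne : P.Nonempty := by rw [← Finset.card_pos, hPcard]; omega
  haveI : Nonempty {x // x ∈ P} := ⟨⟨hPne.choose, hPne.choose_spec⟩⟩
  have hindep : LinearIndependent (ZMod 2) (fun j : {x // x ∈ P} => e j.1) := by
    rw [Fintype.linearIndependent_iff]
    intro g hg j0
    set c : Fin n → ZMod 2 := fun j => if h : j ∈ P then g ⟨j, h⟩ else 0 with hcdef
    have hcP : ∀ (j) (h : j ∈ P), c j = g ⟨j, h⟩ := by intro j h; simp [hcdef, h]
    have hker : H.mulVecLin c = 0 := by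
      funext bb
      have h1 : H.mulVecLin c bb = ∑ j, H bb j * c j := by
        simp [Matrix.mulVecLin_apply, Matrix.mulVec, dotProduct]
      have h2 : ∑ j, H bb j * c j = ∑ j ∈ P, H bb j * c j := by
        rw [eq_comm]
        apply Finset.sum_subset (subset_univ _)
        intro j _ hj
        simp [hcdef, hj]
      have h4 : ∑ j ∈ P, H bb j * c j = ∑ j' : {x // x ∈ P}, g j' * e j'.1 bb := by
        rw [Finset.univ_eq_attach, ← Finset.sum_attach P (fun j => H bb j * c j)]
        refine Finset.sum_congr rfl fun j' _ => ?_
        rw [hcP j'.1 j'.2, mul_comm, hedef]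
      have h5 : ∑ j' : {x // x ∈ P}, g j' * e j'.1 bb = 0 := by
        have h6 := congrFun hg bb
        rw [Finset.sum_apply] at h6
        simpa [smul_eq_mul] using h6
      rw [h1, h2, h4, h5]; rfl
    have hmem : c ∈ Submodule.span (ZMod 2) (Set.range G) := by
      rw [hspan]; exact LinearMap.mem_ker.2 hker
    replace hmem := (Submodule.mem_span_range_iff_exists_fun (R := ZMod 2)).1 hmem
    obtain ⟨d, hd⟩ := hmem
    have hdz : ∀ b, d b = 0 := by
      intro b
      have h6 := congrFun hd (S b)
      rw [Finset.sum_apply] at h6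
      have h7 : ∑ a, (d a • G a) (S b) = d b := by
        have hterm : ∀ a : Fin k, (d a • G a) (S b) = if a = b then d a else 0 := by
          intro a
          rw [Pi.smul_apply, smul_eq_mul, hGS b a]
          by_cases hab : a = b <;> simp [hab]
        rw [Finset.sum_congr rfl (fun a _ => hterm a), Finset.sum_ite_eq']
        simp
      have h8 : c (S b) = 0 := by
        have hnp : S b ∉ P := fun h => (hPmem _).1 h b rfl
        simp [hcdef, hnp]
      rw [h7, h8] at h6
      exact h6
    have h9 : c j0.1 = g j0 := hcP j0.1 j0.2
    rw [← h9, ← hd, Finset.sum_apply]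
    simp [hdz]
  let B : Module.Basis {x // x ∈ P} (ZMod 2) (Fin r → ZMod 2) :=
    basisOfLinearIndependentOfCardEqFinrank hindep
      (by rw [Fintype.card_coe, hPcard, Module.finrank_pi, Fintype.card_fin])
  have hB : ∀ j : {x // x ∈ P}, B j = e j.1 := fun j =>
    congrFun (coe_basisOfLinearIndependentOfCardEqFinrank hindep _) j
  have hrepr : ∀ (a : Fin k) (j : {x // x ∈ P}), B.repr (e (S a)) j = G a j.1 := by
    intro a j
    have h1 : e (S a) = ∑ j' : {x // x ∈ P}, G a j'.1 • B j' := by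
      rw [hrepr_eq a, Finset.univ_eq_attach, ← Finset.sum_attach P (fun x => G a x • e x)]
      exact Finset.sum_congr rfl fun j' _ => by rw [hB]
    rw [h1, map_sum]
    simp only [map_smul, Module.Basis.repr_self]
    rw [Finset.sum_apply']
    simp [Finsupp.single_apply, Finset.sum_ite_eq']
  -- "coordinate" function on all of Fin n
  set rp : (Fin r → ZMod 2) → Fin n → ZMod 2 :=
    fun v j => if h : j ∈ P then B.repr v ⟨j, h⟩ else 0 with hrpdef
  have hrpS : ∀ (a : Fin k) (j : Fin n), j ∈ P → rp (e (S a)) j = G a j := by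
    intro a j hj
    simp only [hrpdef, dif_pos hj, hrepr]
  have hrpadd : ∀ u v j, rp (u + v) j = rp u j + rp v j := by
    intro u v j
    by_cases h : j ∈ P <;> simp [hrpdef, h]
  have hrpe : ∀ x, x ∈ P → ∀ j, j ∈ P → rp (e x) j = if j = x then 1 else 0 := by
    intro x hx j hj
    have h1 : e x = B ⟨x, hx⟩ := (hB ⟨x, hx⟩).symm
    simp only [hrpdef, dif_pos hj, h1, Module.Basis.repr_self, Finsupp.single_apply]
    by_cases hjx : j = x
    · simp [hjx]
    · rw [if_neg hjx, if_neg (fun hh : (⟨x, hx⟩ : {y // y ∈ P}) = ⟨j, hj⟩ =>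
        hjx (by injection hh with h; exact h.symm))]
  have hrp0 : ∀ j, rp 0 j = 0 := by
    intro j; by_cases h : j ∈ P <;> simp [hrpdef, h]
  set φ : Finset (Fin n) → (Fin r → ZMod 2) → ZMod 2 :=
    fun T v => ∑ j ∈ T, rp v j with hphidef
  have hφS : ∀ (T : Finset (Fin n)), T ⊆ P → ∀ a : Fin k,
      φ T (e (S a)) = ∑ j ∈ T, G a j := by
    intro T hT a
    exact Finset.sum_congr rfl fun j hj => hrpS a j (hT hj)
  have hφadd : ∀ T u v, φ T (u + v) = φ T u + φ T v := by
    intro T u v; simp [hphidef, hrpadd, Finset.sum_add_distrib]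
  have hφe : ∀ T, T ⊆ P → ∀ x, x ∈ P → φ T (e x) = if x ∈ T then 1 else 0 := by
    intro T hT x hx
    rw [hphidef]
    simp only []
    rw [Finset.sum_congr rfl (fun j hj => hrpe x hx j (hT hj))]
    exact Finset.sum_ite_eq' T x (fun _ => 1)
  have hφ0 : ∀ T, φ T 0 = 0 := by intro T; simp [hphidef, hrp0]
  have hcardV : ((univ : Finset (Fin r → ZMod 2))).card = 2 ^ r := by
    rw [card_univ]
    simp only [Fintype.card_fun, Fintype.card_fin]
    have h2 : Fintype.card (ZMod 2) = 2 := by decide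
    rw [h2]
  have hfiber : ∀ T, T ⊆ P → T.Nonempty →
      (univ.filter (fun v : Fin r → ZMod 2 => φ T v = 1)).card = 2 ^ (r - 1) := by
    intro T hTP ⟨x, hx⟩
    have hxe : φ T (e x) = 1 := by rw [hφe T hTP x (hTP hx), if_pos hx]
    have hflip : ∀ v, φ T (v + e x) = φ T v + 1 := by intro v; rw [hφadd, hxe]
    have hee : e x + e x = 0 := by
      funext bb; exact CharTwo.add_self_eq_zero _
    have hinv : ∀ v : Fin r → ZMod 2, v + e x + e x = v := by
      intro v; rw [add_assoc, hee, add_zero]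
    have hcards : (univ.filter (fun v : Fin r → ZMod 2 => φ T v = 1)).card
        = (univ.filter (fun v : Fin r → ZMod 2 => ¬ φ T v = 1)).card := by
      apply Finset.card_bij' (fun v _ => v + e x) (fun v _ => v + e x)
      · intro v hv
        simp only [mem_filter, mem_univ, true_and] at hv ⊢
        rw [hflip, hv]; decide
      · intro v hv
        simp only [mem_filter, mem_univ, true_and] at hv ⊢
        rw [hflip]
        rcases zmod2_cases (φ T v) with h | h
        · rw [h]; decide
        · exact absurd h hv
      · intro v _; exact hinv v
      · intro v _; exact hinv v
    have htotal := Finset.card_filter_add_card_filter_not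
      (s := (univ : Finset (Fin r → ZMod 2))) (p := fun v => φ T v = 1)
    rw [← hcards, hcardV] at htotal
    have h2r : 2 ^ r = 2 ^ (r - 1) * 2 := by
      rw [← pow_succ]
      congr 1
      omega
    omega
  have hsupp : ∀ T, T ⊆ P → T.Nonempty →
      (univ.filter (fun a : Fin k => (∑ j ∈ T, G a j) = 1)).card = 2 ^ (r - 1) - T.card := by
    intro T hTP hTne
    have hTsub : T.image e ⊆ univ.filter (fun v : Fin r → ZMod 2 => φ T v = 1) := by
      intro v hv
      obtain ⟨x, hxT, rfl⟩ := Finset.mem_image.1 hv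
      rw [mem_filter]
      exact ⟨mem_univ _, by rw [hφe T hTP x (hTP hxT), if_pos hxT]⟩
    have himg : (univ.filter (fun a : Fin k => (∑ j ∈ T, G a j) = 1)).image (fun a => e (S a))
        = univ.filter (fun v : Fin r → ZMod 2 => φ T v = 1) \ T.image e := by
      ext v
      constructor
      · intro hv
        obtain ⟨a, ha, rfl⟩ := Finset.mem_image.1 hv
        rw [Finset.mem_sdiff]
        constructor
        · rw [mem_filter]
          exact ⟨mem_univ _, by rw [hφS T hTP a]; exact (mem_filter.1 ha).2⟩
        · intro hcon
          obtain ⟨x, hxT, hxe⟩ := Finset.mem_image.1 hcon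
          have hxSa : x = S a := heinj hxe
          exact (hPmem x).1 (hTP hxT) a hxSa.symm
      · intro hv
        rw [Finset.mem_sdiff] at hv
        obtain ⟨hv1, hv2⟩ := hv
        rw [mem_filter] at hv1
        have hvne : v ≠ 0 := by
          intro h0; rw [h0, hφ0] at hv1; exact one_ne_zero hv1.2.symm
        obtain ⟨j, rfl⟩ := hesurj v hvne
        by_cases hjP : j ∈ P
        · exfalso
          have hφj := hv1.2
          rw [hφe T hTP j hjP] at hφj
          by_cases hjT : j ∈ T
          · exact hv2 (Finset.mem_image.2 ⟨j, hjT, rfl⟩)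
          · rw [if_neg hjT] at hφj; exact absurd hφj (by decide)
        · obtain ⟨a, ha⟩ : ∃ a, S a = j := by
            by_contra hcon; push_neg at hcon; exact hjP ((hPmem j).2 hcon)
          apply Finset.mem_image.2
          refine ⟨a, ?_, by rw [ha]⟩
          rw [mem_filter]
          refine ⟨mem_univ _, ?_⟩
          rw [← hφS T hTP a, ha]
          exact hv1.2
    have hinj2 : Function.Injective (fun a : Fin k => e (S a)) := fun a a' h => hSinj (heinj h)
    have hc1 : (univ.filter (fun a : Fin k => (∑ j ∈ T, G a j) = 1)).card
        = ((univ.filter (fun v : Fin r → ZMod 2 => φ T v = 1)) \ T.image e).card := by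
      rw [← himg, Finset.card_image_of_injective _ hinj2]
    rw [hc1, Finset.card_sdiff_of_subset hTsub, Finset.card_image_of_injective _ heinj,
      hfiber T hTP hTne]
  -- notation: sp T is the support of the sum of the columns indexed by T
  have hsum_single : ∀ (s : Finset (Fin k)) (a : Fin k),
      (∑ b ∈ s, Pi.single b (1 : ZMod 2)) a = if a ∈ s then 1 else 0 := by
    intro s a
    rw [Finset.sum_apply, Finset.sum_congr rfl (fun b _ => Pi.single_apply b (1 : ZMod 2) a)]
    exact Finset.sum_ite_eq s a (fun _ => 1)
  have hindic : ∀ T : Finset (Fin n),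
      (∑ j ∈ T, fun a : Fin k => G a j)
        = ∑ b ∈ univ.filter (fun a : Fin k => (∑ j ∈ T, G a j) = 1),
            Pi.single b (1 : ZMod 2) := by
    intro T
    funext a
    rw [Finset.sum_apply, hsum_single]
    rcases zmod2_cases (∑ j ∈ T, G a j) with h | h
    · have hnm : a ∉ univ.filter (fun a : Fin k => (∑ j ∈ T, G a j) = 1) := by
        intro hcon
        have h2 := (mem_filter.1 hcon).2
        rw [h] at h2
        exact absurd h2 (by decide)
      rw [h, if_neg hnm]
    · have hm : a ∈ univ.filter (fun a : Fin k => (∑ j ∈ T, G a j) = 1) :=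
        mem_filter.2 ⟨mem_univ a, h⟩
      rw [h, if_pos hm]
  have hsumimg : ∀ s : Finset (Fin k),
      (∑ j ∈ s.image S, fun a : Fin k => G a j) = ∑ b ∈ s, Pi.single b (1 : ZMod 2) := by
    intro s
    rw [Finset.sum_image (fun x _ y _ h => hSinj h)]
    exact Finset.sum_congr rfl fun b _ => hS b
  have hx2 : ∀ x : Fin k → ZMod 2, x + x = 0 := by
    intro x; funext a; exact CharTwo.add_self_eq_zero _
  have hdisj : ∀ (T : Finset (Fin n)), T ⊆ P → ∀ s : Finset (Fin k),
      Disjoint T (s.image S) := by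
    intro T hT s
    rw [Finset.disjoint_left]
    intro j hjT hjimg
    obtain ⟨b, _, hb⟩ := Finset.mem_image.1 hjimg
    exact (hPmem j).1 (hT hjT) b hb
  have hfilterR : ∀ (T : Finset (Fin n)), T ⊆ P → ∀ s : Finset (Fin k),
      (T ∪ s.image S).filter (fun j => ∀ a : Fin k, S a ≠ j) = T := by
    intro T hT s
    ext j
    rw [mem_filter, Finset.mem_union]
    constructor
    · rintro ⟨hj | hj, hpar⟩
      · exact hj
      · obtain ⟨b, _, hb⟩ := Finset.mem_image.1 hj
        exact absurd hb (hpar b)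
    · intro hj
      exact ⟨Or.inl hj, (hPmem j).1 (hT hj)⟩
  have hdecomp : ∀ D : Finset (Fin n),
      D \ (D.filter (fun j => ∀ a : Fin k, S a ≠ j))
        = (univ.filter (fun b : Fin k => S b ∈ D)).image S := by
    intro D
    ext j
    rw [Finset.mem_sdiff]
    constructor
    · rintro ⟨hjD, hjT⟩
      have hnp : ¬ ∀ a : Fin k, S a ≠ j := fun h => hjT (mem_filter.2 ⟨hjD, h⟩)
      push_neg at hnp
      obtain ⟨b, hb⟩ := hnp
      exact Finset.mem_image.2 ⟨b, mem_filter.2 ⟨mem_univ _, by rw [hb]; exact hjD⟩, hb⟩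
    · intro hj
      obtain ⟨b, hbB, hb⟩ := Finset.mem_image.1 hj
      have hbR : S b ∈ D := (mem_filter.1 hbB).2
      rw [← hb]
      refine ⟨hbR, ?_⟩
      intro hcon
      exact (mem_filter.1 hcon).2 b rfl
  have hsumdec : ∀ D : Finset (Fin n),
      (∑ j ∈ D, fun a : Fin k => G a j)
        = (∑ j ∈ D.filter (fun j => ∀ a : Fin k, S a ≠ j), fun a : Fin k => G a j)
          + ∑ b ∈ univ.filter (fun b : Fin k => S b ∈ D), Pi.single b (1 : ZMod 2) := by
    intro D
    have h1 : ((∑ j ∈ D \ (D.filter (fun j => ∀ a : Fin k, S a ≠ j)), fun a : Fin k => G a j)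
        + ∑ j ∈ D.filter (fun j => ∀ a : Fin k, S a ≠ j), fun a : Fin k => G a j)
        = ∑ j ∈ D, fun a : Fin k => G a j :=
      Finset.sum_sdiff (Finset.filter_subset _ _)
    rw [hdecomp D, hsumimg] at h1
    rw [← h1, add_comm]
  have hRsum : ∀ (T : Finset (Fin n)), T ⊆ P →
      ∀ i ∈ univ.filter (fun a : Fin k => (∑ j ∈ T, G a j) = 1),
      (∑ j ∈ T ∪ ((univ.filter (fun a : Fin k => (∑ j ∈ T, G a j) = 1)).erase i).image S,
          fun a : Fin k => G a j)
        = Pi.single i 1 := by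
    intro T hTP i hi
    rw [Finset.sum_union (hdisj T hTP _), hindic T, hsumimg,
      ← Finset.add_sum_erase _ _ hi, add_assoc, hx2, add_zero]
  -- the finite set of all pairs
  set A : Finset (Fin k × Finset (Fin n)) :=
    (P.powersetCard t).biUnion
      (fun T => (univ.filter (fun a : Fin k => (∑ j ∈ T, G a j) = 1)).image
        (fun i => (i, T ∪ ((univ.filter (fun a : Fin k => (∑ j ∈ T, G a j) = 1)).erase i).image S)))
    with hAdef
  have hTfacts : ∀ T ∈ P.powersetCard t, T ⊆ P ∧ T.card = t ∧ T.Nonempty := by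
    intro T hT
    obtain ⟨h1, h2⟩ := Finset.mem_powersetCard.1 hT
    exact ⟨h1, h2, Finset.card_pos.1 (by omega)⟩
  have hAcard : A.card = r.choose t * (2 ^ (r - 1) - t) := by
    rw [hAdef, Finset.card_biUnion]
    · have hterm : ∀ T ∈ P.powersetCard t,
          ((univ.filter (fun a : Fin k => (∑ j ∈ T, G a j) = 1)).image
            (fun i => (i, T ∪ ((univ.filter (fun a : Fin k => (∑ j ∈ T, G a j) = 1)).erase i).image S))).card
            = 2 ^ (r - 1) - t := by
        intro T hT
        obtain ⟨hTP, hTc, hTne⟩ := hTfacts T hT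
        rw [Finset.card_image_of_injective _ (fun a b h => (Prod.ext_iff.1 h).1),
          hsupp T hTP hTne, hTc]
      rw [Finset.sum_congr rfl hterm, Finset.sum_const, Finset.card_powersetCard, hPcard,
        smul_eq_mul]
    · intro T1 h1 T2 h2 hne
      rw [Function.onFun, Finset.disjoint_left]
      intro p hp1 hp2
      obtain ⟨i1, hi1, hp1e⟩ := Finset.mem_image.1 hp1
      obtain ⟨i2, hi2, hp2e⟩ := Finset.mem_image.1 hp2
      apply hne
      have hTP1 := (hTfacts T1 h1).1
      have hTP2 := (hTfacts T2 h2).1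
      have e1 : p.2.filter (fun j => ∀ a : Fin k, S a ≠ j) = T1 := by
        rw [← hp1e]; exact hfilterR T1 hTP1 _
      have e2 : p.2.filter (fun j => ∀ a : Fin k, S a ≠ j) = T2 := by
        rw [← hp2e]; exact hfilterR T2 hTP2 _
      rw [← e1, ← e2]
  have hseteq : {p : Fin k × Finset (Fin n) |
      IsMinRecoverySet G p.1 p.2 ∧ 1 < p.2.card ∧
      (p.2.filter fun j => ∀ a : Fin k, S a ≠ j).card = t}
      = (A : Set (Fin k × Finset (Fin n))) := by
    ext ⟨i, R⟩
    simp only [Set.mem_setOf_eq, Finset.mem_coe, hAdef, Finset.mem_biUnion, Finset.mem_image]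
    constructor
    · rintro ⟨hmin, hcard, hfilt⟩
      have hTP : R.filter (fun j => ∀ a : Fin k, S a ≠ j) ⊆ P :=
        fun j hj => (hPmem j).2 (mem_filter.1 hj).2
      have hTR : R.filter (fun j => ∀ a : Fin k, S a ≠ j) ⊆ R := Finset.filter_subset _ _
      obtain ⟨hsum, hdep⟩ := (isMinRecovery_iff G i R).1 hmin
      rw [hsumdec R, hindic] at hsum
      -- hsum : ∑ single over sp(T) + ∑ single over Bs = single i 1
      have hiB : i ∉ univ.filter (fun b : Fin k => S b ∈ R) := by
        intro hcon
        have hSiR : S i ∈ R := (mem_filter.1 hcon).2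
        have hDne : (R.erase (S i)).Nonempty := by
          rw [← Finset.card_pos, Finset.card_erase_of_mem hSiR]; omega
        apply hdep (R.erase (S i)) (Finset.erase_subset _ _) hDne
        have h2 := Finset.add_sum_erase R (fun j => fun a : Fin k => G a j) hSiR
        beta_reduce at h2
        rw [(isMinRecovery_iff G i R).1 hmin |>.1, hS i] at h2
        exact add_eq_left.1 h2
      have hmemiff : ∀ a : Fin k,
          (a ∈ univ.filter (fun a : Fin k =>
            (∑ j ∈ R.filter (fun j => ∀ a : Fin k, S a ≠ j), G a j) = 1))
          ↔ (a = i ∨ a ∈ univ.filter (fun b : Fin k => S b ∈ R)) := by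
        intro a
        have h4 := congrFun hsum a
        rw [Pi.add_apply, hsum_single, hsum_single, Pi.single_apply] at h4
        constructor
        · intro h5
          by_contra hcon
          push_neg at hcon
          obtain ⟨h7, h6⟩ := hcon
          rw [if_pos h5, if_neg h6, if_neg h7, add_zero] at h4
          exact absurd h4 (by decide)
        · intro h5
          by_contra h6
          rcases h5 with h7 | h8
          · subst h7
            rw [if_neg h6, if_neg hiB, if_pos rfl, add_zero] at h4
            exact absurd h4 (by decide)
          · have h7 : a ≠ i := fun hh => hiB (hh ▸ h8)
            rw [if_neg h6, if_pos h8, if_neg h7, zero_add] at h4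
            exact absurd h4 (by decide)
      have hisp : i ∈ univ.filter (fun a : Fin k =>
          (∑ j ∈ R.filter (fun j => ∀ a : Fin k, S a ≠ j), G a j) = 1) :=
        (hmemiff i).2 (Or.inl rfl)
      have hBs : univ.filter (fun b : Fin k => S b ∈ R)
          = (univ.filter (fun a : Fin k =>
            (∑ j ∈ R.filter (fun j => ∀ a : Fin k, S a ≠ j), G a j) = 1)).erase i := by
        ext a
        rw [Finset.mem_erase]
        constructor
        · intro ha
          exact ⟨fun hh => hiB (hh ▸ ha), (hmemiff a).2 (Or.inr ha)⟩
        · rintro ⟨hne2, ha⟩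
          rcases (hmemiff a).1 ha with h | h
          · exact absurd h hne2
          · exact h
      have hReq : R = R.filter (fun j => ∀ a : Fin k, S a ≠ j)
          ∪ ((univ.filter (fun a : Fin k =>
            (∑ j ∈ R.filter (fun j => ∀ a : Fin k, S a ≠ j), G a j) = 1)).erase i).image S := by
        rw [← hBs, ← hdecomp R, Finset.union_sdiff_of_subset hTR]
      refine ⟨R.filter (fun j => ∀ a : Fin k, S a ≠ j),
        Finset.mem_powersetCard.2 ⟨hTP, hfilt⟩, i, hisp, ?_⟩
      rw [← hReq]
    · rintro ⟨T, hTmem, i', hi', heq⟩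
      obtain ⟨hTP, hTc, hTne⟩ := hTfacts T hTmem
      have heq1 : i' = i := congrArg Prod.fst heq
      have heq2 : T ∪ ((univ.filter (fun a : Fin k => (∑ j ∈ T, G a j) = 1)).erase i').image S
          = R := congrArg Prod.snd heq
      subst heq1
      have htpow : t < 2 ^ (r - 1) := lt_of_le_of_lt ht2 hpow
      have hcardR : R.card = 2 ^ (r - 1) - 1 := by
        rw [← heq2, Finset.card_union_of_disjoint (hdisj T hTP _),
          Finset.card_image_of_injective _ hSinj, Finset.card_erase_of_mem hi',
          hsupp T hTP hTne, hTc]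
        omega
      refine ⟨?_, by omega, by rw [← heq2, hfilterR T hTP, hTc]⟩
      rw [isMinRecovery_iff]
      constructor
      · rw [← heq2]
        exact hRsum T hTP i' hi'
      · intro D hD hDne h0
        rw [← heq2] at hD
        rw [hsumdec D, hindic] at h0
        have hT'T : D.filter (fun j => ∀ a : Fin k, S a ≠ j) ⊆ T := by
          intro j hj
          obtain ⟨hjD, hjpar⟩ := mem_filter.1 hj
          rcases Finset.mem_union.1 (hD hjD) with h | h
          · exact h
          · obtain ⟨b, _, hb⟩ := Finset.mem_image.1 h
            exact absurd hb (hjpar b)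
        have hBs'sub : univ.filter (fun b : Fin k => S b ∈ D)
            ⊆ (univ.filter (fun a : Fin k => (∑ j ∈ T, G a j) = 1)).erase i' := by
          intro b hb
          have hSbD : S b ∈ D := (mem_filter.1 hb).2
          rcases Finset.mem_union.1 (hD hSbD) with h | h
          · exact absurd rfl ((hPmem (S b)).1 (hTP h) b)
          · obtain ⟨b2, hb2, hbe⟩ := Finset.mem_image.1 h
            rwa [← hSinj hbe]
        have hspB : univ.filter (fun a : Fin k =>
            (∑ j ∈ D.filter (fun j => ∀ a : Fin k, S a ≠ j), G a j) = 1)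
            = univ.filter (fun b : Fin k => S b ∈ D) := by
          ext a
          have h4 := congrFun h0 a
          rw [Pi.add_apply, hsum_single, hsum_single, Pi.zero_apply] at h4
          constructor
          · intro h5
            by_contra h6
            rw [if_pos h5, if_neg h6, add_zero] at h4
            exact absurd h4 (by decide)
          · intro h5
            by_contra h6
            rw [if_neg h6, if_pos h5, zero_add] at h4
            exact absurd h4 (by decide)
        by_cases hT'e : (D.filter (fun j => ∀ a : Fin k, S a ≠ j)).Nonempty
        · have hc1 := hsupp _ (hT'T.trans hTP) hT'e
          rw [hspB] at hc1
          have hc2 := Finset.card_le_card hBs'sub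
          rw [Finset.card_erase_of_mem hi', hsupp T hTP hTne, hTc] at hc2
          have hc4 : (D.filter (fun j => ∀ a : Fin k, S a ≠ j)).card ≤ t := by
            rw [← hTc]; exact Finset.card_le_card hT'T
          omega
        · rw [Finset.not_nonempty_iff_eq_empty] at hT'e
          have hsp0 : univ.filter (fun a : Fin k =>
              (∑ j ∈ D.filter (fun j => ∀ a : Fin k, S a ≠ j), G a j) = 1) = ∅ := by
            rw [hT'e]
            ext a
            simp
          have hBs'0 : univ.filter (fun b : Fin k => S b ∈ D) = ∅ := by
            rw [← hspB, hsp0]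
          have h7 := hdecomp D
          rw [hT'e, Finset.sdiff_empty, hBs'0, Finset.image_empty] at h7
          exact absurd h7 (Finset.nonempty_iff_ne_empty.1 hDne)
  rw [hseteq, Set.ncard_coe_finset, hAcard]
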